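/- With μ = supₙ μₙ singular of cofinality ω and Q the poset of closed size-μ subsets of μ: for every normal condition q ∈ Q and every infinite set t ⊆ a(q), there exists a normal condition q' ≤ q with a(q') = t. -/

import Mathlib

open Cardinal Set

noncomputable section

/-- Cardinality of a set of ordinals. -/
def scard (s : Set Ordinal.{0}) : Cardinal.{1} := Cardinal.mk s

/-- The set of accumulation points of a set of ordinals `p`:
ordinals `α` such that `p ∩ α` is nonempty and unbounded in `α`. -/
def accSet (p : Set Ordinal.{0}) : Set Ordinal.{0} :=
  {α | (p ∩ Set.Iio α).Nonempty ∧ α = sSup (p ∩ Set.Iio α)}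

/-- A set of ordinals is closed iff it contains all of its accumulation
points below its supremum. -/
def IsClosedCond (q : Set Ordinal.{0}) : Prop :=
  accSet q ∩ Set.Iio (sSup q) ⊆ q

/-- Order type of a set of ordinals. -/
def otp (s : Set Ordinal.{0}) : Ordinal.{1} :=
  Ordinal.type ((· < ·) : s → s → Prop)

/-- Membership in the poset `P`: subsets of `μ` of cardinality `μ`. -/
def InP (μ : Cardinal.{0}) (p : Set Ordinal.{0}) : Prop :=
  p ⊆ Set.Iio μ.ord ∧ scard p = Cardinal.lift.{1,0} μ

/-- The almost-inclusion ordering: `p₁ ≤ p₂` iff `|p₁ \ p₂| < μ`. -/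
def condLe (μ : Cardinal.{0}) (p₁ p₂ : Set Ordinal.{0}) : Prop :=
  scard (p₁ \ p₂) < Cardinal.lift.{1,0} μ

/-- Membership in the poset `Q`: closed subsets of `μ` of cardinality `μ`. -/
def InQ (μ : Cardinal.{0}) (q : Set Ordinal.{0}) : Prop :=
  InP μ q ∧ IsClosedCond q

/-- The interval `[μₙ, μₙ₊₁)`. -/
def interval (μseq : ℕ → Cardinal.{0}) (n : ℕ) : Set Ordinal.{0} :=
  Set.Ico ((μseq n).ord) ((μseq (n+1)).ord)

/-- `a(q) = {n : q ∩ [μₙ, μₙ₊₁) ≠ ∅}`. -/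
def aSet (μseq : ℕ → Cardinal.{0}) (q : Set Ordinal.{0}) : Set ℕ :=
  {n | (q ∩ interval μseq n).Nonempty}

/-- Normality: letting `⟨mₙ⟩` enumerate `a(q)` increasingly,
`otp (q ∩ [μ_{mₙ}, μ_{mₙ+1})) = μₙ + 1`. -/
def IsNormalCond (μseq : ℕ → Cardinal.{0}) (q : Set Ordinal.{0}) : Prop :=
  ∃ m : ℕ → ℕ, StrictMono m ∧ Set.range m = aSet μseq q ∧
    ∀ n, otp (q ∩ interval μseq (m n)) = Ordinal.lift.{1,0} ((μseq n).ord + 1)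

/-- `χ⁺_q(n) = sup (q ∩ [μₙ, μₙ₊₁))`. -/
def chiP (μseq : ℕ → Cardinal.{0}) (q : Set Ordinal.{0}) (n : ℕ) : Ordinal.{0} :=
  sSup (q ∩ interval μseq n)

/-- `χ⁻_q(n) = min (q ∩ [μₙ, μₙ₊₁))`. -/
def chiM (μseq : ℕ → Cardinal.{0}) (q : Set Ordinal.{0}) (n : ℕ) : Ordinal.{0} :=
  sInf (q ∩ interval μseq n)

/-- `μₙ` is a strictly increasing sequence of regular cardinals with supremum `μ`. -/
def GoodSeq (μ : Cardinal.{0}) (μseq : ℕ → Cardinal.{0}) : Prop :=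
  StrictMono μseq ∧ (∀ n, (μseq n).IsRegular) ∧ μ = ⨆ n, μseq n

section Stmt6Aux

lemma otp_mono {s u : Set Ordinal.{0}} (h : s ⊆ u) : otp s ≤ otp u :=
  RelEmbedding.ordinal_type_le ⟨⟨Set.inclusion h, Set.inclusion_injective h⟩, Iff.rfl⟩

lemma otp_Iio (o : Ordinal.{0}) : otp (Set.Iio o) = Ordinal.lift.{1} o := by
  have := Ordinal.typein_ordinal o
  rw [← Ordinal.type_subrel] at this
  exact this

lemma otp_Iic (o : Ordinal.{0}) : otp (Set.Iic o) = Ordinal.lift.{1} (o + 1) := by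
  rw [show Set.Iic o = Set.Iio (o + 1) by
    ext x; rw [Set.mem_Iic, Set.mem_Iio, Ordinal.add_one_eq_succ, Order.lt_succ_iff]]
  exact otp_Iio _

lemma otp_eq_of_iso {p r : Set Ordinal.{0}} (f : p ≃o r) : otp p = otp r :=
  Quotient.sound ⟨⟨f.toEquiv, fun {_ _} => f.lt_iff_lt⟩⟩

lemma initial_piece {s : Set Ordinal.{0}} {δ : Ordinal.{0}}
    (h : Ordinal.lift.{1} δ < otp s) :
    ∃ p : Set Ordinal.{0}, p ⊆ s ∧ otp p = Ordinal.lift.{1} (δ + 1) ∧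
      ∃ b, b ∈ p ∧ (∀ y ∈ p, y ≤ b) ∧ (∀ x ∈ s, x ≤ b → x ∈ p) := by
  set r := ((·<·) : s → s → Prop) with hr
  obtain ⟨b0, hb0⟩ := Ordinal.typein_surj r h
  set b := b0.1 with hb
  have hmem : ∀ {x : Ordinal} (hx : x ∈ s),
      (Ordinal.typein r ⟨x, hx⟩ ≤ Ordinal.lift.{1} δ ↔ x ≤ b) := by
    intro x hx
    rw [← hb0, Ordinal.typein_le_typein]
    constructor
    · intro h'
      by_contra hc
      exact h' (show r b0 ⟨x, hx⟩ from lt_of_not_ge hc)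
    · intro h' hc
      exact absurd h' (not_le.2 hc)
  refine ⟨s ∩ Set.Iic b, Set.inter_subset_left, ?_, b, ⟨b0.2, le_refl b⟩,
    fun y hy => hy.2, fun x hx hxb => ⟨hx, hxb⟩⟩
  set p : Set Ordinal.{0} := s ∩ Set.Iic b with hp
  have hle : ∀ x : p, Ordinal.typein r ⟨x.1, x.2.1⟩ ≤ Ordinal.lift.{1} δ := by
    intro x; exact (hmem x.2.1).2 x.2.2
  have hdown : ∀ x : p, ∃ a', Ordinal.lift.{1} a' = Ordinal.typein r ⟨x.1, x.2.1⟩ :=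
    fun x => Ordinal.mem_range_lift_of_le (hle x)
  set f : p → (Set.Iic δ : Set Ordinal.{0}) := fun x =>
    ⟨Classical.choose (hdown x), by
      have := Classical.choose_spec (hdown x)
      have h2 := hle x
      rw [← this] at h2
      exact Ordinal.lift_le.1 h2⟩ with hf
  have hfspec : ∀ x : p, Ordinal.lift.{1} (f x).1 = Ordinal.typein r ⟨x.1, x.2.1⟩ :=
    fun x => Classical.choose_spec (hdown x)
  have hfm : StrictMono f := by
    intro x y hxy
    have : Ordinal.typein r ⟨x.1, x.2.1⟩ < Ordinal.typein r ⟨y.1, y.2.1⟩ :=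
      (Ordinal.typein_lt_typein r).2 (show (x:Ordinal) < y from hxy)
    rw [← hfspec x, ← hfspec y] at this
    exact Ordinal.lift_lt.1 this
  have hfs : Function.Surjective f := by
    rintro ⟨γ, hγ⟩
    have h1 : Ordinal.lift.{1} γ < Ordinal.type r :=
      lt_of_le_of_lt (Ordinal.lift_le.2 hγ) h
    obtain ⟨a, ha⟩ := Ordinal.typein_surj r h1
    have hab : a.1 ≤ b := by
      rw [← Subtype.eta a a.2] at ha
      exact (hmem a.2).1 (ha ▸ Ordinal.lift_le.2 hγ)
    refine ⟨⟨a.1, a.2, hab⟩, ?_⟩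
    apply Subtype.ext
    apply Ordinal.lift_inj.1
    rw [hfspec ⟨a.1, a.2, hab⟩, Subtype.eta, ha]
  rw [otp_eq_of_iso (StrictMono.orderIsoOfSurjective f hfm hfs)]
  exact otp_Iic δ

lemma interval_unique {μseq : ℕ → Cardinal.{0}} (hmono : StrictMono μseq)
    {x : Ordinal.{0}} {i j : ℕ} (hi : x ∈ interval μseq i) (hj : x ∈ interval μseq j) :
    i = j := by
  by_contra hne
  rcases Nat.lt_or_ge i j with h | h
  · exact absurd (lt_of_lt_of_le hi.2
      (Cardinal.ord_le_ord.2 (hmono.monotone h))) (not_lt.2 hj.1)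
  · rcases Nat.lt_or_ge j i with h' | h'
    · exact absurd (lt_of_lt_of_le hj.2
        (Cardinal.ord_le_ord.2 (hmono.monotone h'))) (not_lt.2 hi.1)
    · exact hne (le_antisymm h' h)

end Stmt6Aux

/-- For every normal condition  and every infinite ,
there is a normal condition  with . -/
theorem stmt_6 (μ : Cardinal.{0}) (hinf : Cardinal.aleph0 < μ)
    (hcof : μ.ord.cof = Cardinal.aleph0)
    (μseq : ℕ → Cardinal.{0}) (hseq : GoodSeq μ μseq)
    (q : Set Ordinal.{0}) (hq : InQ μ q) (hn : IsNormalCond μseq q)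
    (t : Set ℕ) (ht : t ⊆ aSet μseq q) (htinf : t.Infinite) :
    ∃ q' : Set Ordinal.{0}, InQ μ q' ∧ IsNormalCond μseq q' ∧
      condLe μ q' q ∧ aSet μseq q' = t := by
  classical
  obtain ⟨hmono, hreg, hsup⟩ := hseq
  obtain ⟨m, hm_mono, hm_range, hm_otp⟩ := hn
  haveI : Infinite t := Set.infinite_coe_iff.2 htinf
  -- enumerate t
  set k : ℕ → ℕ := fun n => Nat.orderEmbeddingOfSet t n with hk
  have hk_mono : StrictMono k := (Nat.orderEmbeddingOfSet t).strictMono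
  have hk_range : Set.range k = t := Nat.orderEmbeddingOfSet_range t
  have hk_mem : ∀ n, k n ∈ t := fun n => hk_range ▸ Set.mem_range_self n
  -- find g with m (g n) = k n
  have hex : ∀ n, ∃ j, m j = k n := by
    intro n
    have : k n ∈ Set.range m := hm_range ▸ ht (hk_mem n)
    exact this
  choose g hg using hex
  have hg_mono : StrictMono g := by
    intro a b hab
    have : m (g a) < m (g b) := by rw [hg a, hg b]; exact hk_mono hab
    exact hm_mono.lt_iff_lt.1 this
  -- order type bound
  have hlt : ∀ n, Ordinal.lift.{1} ((μseq n).ord) < otp (q ∩ interval μseq (k n)) := by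
    intro n
    rw [← hg n, hm_otp (g n)]
    apply Ordinal.lift_lt.2
    rw [Ordinal.add_one_eq_succ, Order.lt_succ_iff]
    exact Cardinal.ord_le_ord.2 (hmono.monotone (hg_mono.le_apply))
  -- pieces
  have hpieces := fun n => initial_piece (hlt n)
  choose P hPsub hPotp b hbP hbmax hbdown using hpieces
  have hPint : ∀ n, P n ⊆ interval μseq (k n) :=
    fun n => (hPsub n).trans Set.inter_subset_right
  have hPq : ∀ n, P n ⊆ q := fun n => (hPsub n).trans Set.inter_subset_left
  set q' : Set Ordinal.{0} := ⋃ n, P n with hq'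
  have hq'q : q' ⊆ q := Set.iUnion_subset hPq
  have hq'μ : q' ⊆ Set.Iio μ.ord := hq'q.trans hq.1.1
  have hPq' : ∀ n, P n ⊆ q' := fun n => Set.subset_iUnion P n
  have hmemP : ∀ {x}, x ∈ q' → ∃ n, x ∈ P n := fun hx => Set.mem_iUnion.1 hx
  -- q' ∩ interval (k n) = P n
  have hq'int : ∀ n, q' ∩ interval μseq (k n) = P n := by
    intro n
    apply Set.Subset.antisymm
    · rintro x ⟨hx1, hx2⟩
      obtain ⟨j, hj⟩ := hmemP hx1
      have : k j = k n := interval_unique hmono (hPint j hj) hx2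
      have : j = n := hk_mono.injective this
      exact this ▸ hj
    · exact fun x hx => ⟨hPq' n hx, hPint n hx⟩
  -- aSet q' = t
  have haq' : aSet μseq q' = t := by
    ext n
    constructor
    · rintro ⟨x, hx1, hx2⟩
      obtain ⟨j, hj⟩ := hmemP hx1
      have : k j = n := interval_unique hmono (hPint j hj) hx2
      exact this ▸ hk_mem j
    · intro hn'
      obtain ⟨j, hj⟩ := hk_range.symm ▸ hn'
      exact ⟨b j, hPq' j (hbP j), hj ▸ hPint j (hbP j)⟩
  -- cardinality of pieces
  have hPcard : ∀ n, scard (P n) = Cardinal.lift.{1} (μseq n) := by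
    intro n
    have h1 : scard (P n) = (otp (P n)).card := (Ordinal.card_type _).symm
    rw [h1, hPotp n, ← Ordinal.lift_card, Ordinal.add_one_eq_succ, Ordinal.card_succ,
      Cardinal.card_ord, Cardinal.add_one_eq (hreg n).aleph0_le]
  -- cardinality of q'
  have hcard' : scard q' = Cardinal.lift.{1} μ := by
    apply le_antisymm
    · have h0 := Cardinal.mk_le_mk_of_subset hq'q
      exact le_trans (show scard q' ≤ scard q from h0) (le_of_eq hq.1.2)
    · rw [hsup, Cardinal.lift_iSup (Cardinal.bddAbove_range _)]
      apply ciSup_le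
      intro n
      rw [← hPcard n]
      exact Cardinal.mk_le_mk_of_subset (hPq' n)
  -- bounds for sups
  have hbddq' : BddAbove q' := ⟨μ.ord, fun x hx => le_of_lt (hq'μ hx)⟩
  have hbddq : BddAbove q := ⟨μ.ord, fun x hx => le_of_lt (hq.1.1 hx)⟩
  have hb_lb : ∀ n, (μseq (k n)).ord ≤ b n := fun n => (hPint n (hbP n)).1
  have hb_ub : ∀ n, b n < (μseq (k n + 1)).ord := fun n => (hPint n (hbP n)).2
  have hsupq'le : sSup q' ≤ μ.ord :=
    csSup_le ⟨b 0, hPq' 0 (hbP 0)⟩ (fun x hx => le_of_lt (hq'μ hx))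
  -- closedness
  have hclosed : IsClosedCond q' := by
    rintro α ⟨⟨hne, hsupα⟩, hαlt⟩
    set T : Set ℕ := {n | (P n ∩ Set.Iio α).Nonempty} with hT
    have hTne : T.Nonempty := by
      obtain ⟨x, hx1, hx2⟩ := hne
      obtain ⟨j, hj⟩ := hmemP hx1
      exact ⟨j, x, hj, hx2⟩
    have hTfin : T.Finite := by
      by_contra hTinf
      have hμα : μ.ord ≤ α := by
        apply le_of_forall_lt
        intro c hc
        have hcμ : c.card < μ := Cardinal.lt_ord.1 hc
        have : ∃ N, c.card < μseq N := by
          by_contra hN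
          push_neg at hN
          exact absurd (hsup ▸ ciSup_le hN : μ ≤ c.card) (not_le.2 hcμ)
        obtain ⟨N, hN⟩ := this
        have hTinf' : T.Infinite := hTinf
        obtain ⟨n, hnT, hNn⟩ := hTinf'.exists_gt N
        obtain ⟨y, hyP, hyα⟩ := hnT
        have h1 : c < (μseq N).ord := Cardinal.lt_ord.2 hN
        have h2 : (μseq N).ord ≤ (μseq (k n)).ord :=
          Cardinal.ord_le_ord.2 (hmono.monotone (le_trans (le_of_lt hNn) (hk_mono.le_apply)))
        have h3 : (μseq (k n)).ord ≤ y := (hPint n hyP).1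
        exact lt_trans (lt_of_lt_of_le h1 (h2.trans h3)) hyα
      exact absurd (lt_of_le_of_lt hμα hαlt) (not_lt.2 hsupq'le)
    obtain ⟨N, hNT, hNmax⟩ : ∃ a ∈ T, ∀ a' ∈ T, id a ≤ id a' → id a = id a' := by
      obtain ⟨N, hNT, hNmax⟩ := hTfin.exists_maximal hTne
      exact ⟨N, hNT, fun j hj h => le_antisymm h (hNmax hj h)⟩
    have hNmax' : ∀ j ∈ T, j ≤ N := by
      intro j hj
      by_contra hc
      have := hNmax j hj (le_of_not_ge hc)
      simp only [id] at this
      omega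
    obtain ⟨y, hyP, hyα⟩ := hNT
    -- α ≤ b N
    have hαb : α ≤ b N := by
      rw [hsupα]
      apply csSup_le hne
      rintro x ⟨hx1, hx2⟩
      obtain ⟨j, hj⟩ := hmemP hx1
      have hjT : j ∈ T := ⟨x, hj, hx2⟩
      rcases eq_or_lt_of_le (hNmax' j hjT) with h | h
      · exact h ▸ hbmax j x hj
      · have h1 : x < (μseq (k j + 1)).ord := (hPint j hj).2
        have h2 : (μseq (k j + 1)).ord ≤ (μseq (k N)).ord :=
          Cardinal.ord_le_ord.2 (hmono.monotone (hk_mono h))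
        exact le_of_lt (lt_of_lt_of_le h1 (h2.trans (hb_lb N)))
    -- α is acc point of q
    have hyq : y ∈ q ∩ Set.Iio α := ⟨hPq N hyP, hyα⟩
    have hsupq : α = sSup (q ∩ Set.Iio α) := by
      apply le_antisymm
      · calc α = sSup (q' ∩ Set.Iio α) := hsupα
          _ ≤ sSup (q ∩ Set.Iio α) := csSup_le_csSup ⟨α, fun z hz => le_of_lt hz.2⟩ hne
            (fun z hz => ⟨hq'q hz.1, hz.2⟩)
      · exact csSup_le ⟨y, hyq⟩ (fun z hz => le_of_lt hz.2)
    have hαq : α < sSup q := by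
      have h1 : b N < (μseq (k N + 1)).ord := hb_ub N
      have h2 : (μseq (k N + 1)).ord ≤ (μseq (k (N+1))).ord :=
        Cardinal.ord_le_ord.2 (hmono.monotone (hk_mono (Nat.lt_succ_self N)))
      have h3 : b (N+1) ∈ q := hPq (N+1) (hbP (N+1))
      calc α ≤ b N := hαb
        _ < (μseq (k (N+1))).ord := lt_of_lt_of_le h1 h2
        _ ≤ b (N+1) := hb_lb (N+1)
        _ ≤ sSup q := le_csSup hbddq h3
    have hαinq : α ∈ q := hq.2 ⟨⟨⟨y, hyq⟩, hsupq⟩, hαq⟩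
    have hαint : α ∈ interval μseq (k N) := by
      constructor
      · exact le_of_lt (lt_of_le_of_lt (hPint N hyP).1 hyα)
      · exact lt_of_le_of_lt hαb (hb_ub N)
    exact hPq' N (hbdown N α ⟨hαinq, hαint⟩ hαb)
  refine ⟨q', ⟨⟨hq'μ, hcard'⟩, hclosed⟩, ⟨k, hk_mono, by rw [haq']; exact hk_range, ?_⟩, ?_, haq'⟩
  · intro n
    rw [hq'int n]
    exact hPotp n
  · unfold condLe
    rw [Set.diff_eq_empty.2 hq'q]
    have : scard (∅ : Set Ordinal.{0}) = 0 := Cardinal.mk_emptyCollection _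
    rw [this]
    refine pos_iff_ne_zero.2 ?_
    rw [ne_eq, Cardinal.lift_eq_zero]
    exact ne_of_gt (lt_trans Cardinal.aleph0_pos hinf)
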